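/- arXiv:1204.3186 — 2 statements merged into one kernel-verified Lean document; each statement's English description precedes it below -/
import Mathlib

section
/- The differences Δ_x = P_x − P_{x−1} of the Poisson distribution of order k satisfy, for all x ≥ 0: (x+1)(x+2)/λ · Δ_{x+2} = Σ_{j=1}^{k−1} (jλ + x + 1 − j) P_{x+1−j} + k(λ − x − 2) P_{x−k+1}, where P_y = 0 for y < 0. -/
open scoped BigOperators
open Real

/-- The pmf of the Poisson distribution of order `k` with parameter `lam`,
indexed by `x : ℤ` (it vanishes for `x < 0`):
`f_k(x;λ) = Σ e^{-kλ} λ^{x₁+⋯+x_k}/(x₁!⋯x_k!)` summed over all `k`-tuples of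
nonnegative integers with `x₁ + 2x₂ + ⋯ + k x_k = x`. -/
noncomputable def poissonOrderK (k : ℕ) (lam : ℝ) (x : ℤ) : ℝ :=
  ∑' t : Fin k → ℕ,
    if ((∑ i : Fin k, ((i : ℕ) + 1) * t i : ℕ) : ℤ) = x then
      Real.exp (-(k * lam)) * lam ^ (∑ i : Fin k, t i) /
        ∏ i : Fin k, (Nat.factorial (t i) : ℝ)
    else 0

/-- The difference `Δ_x = P_x - P_{x-1}`. -/
noncomputable def deltaOrderK (k : ℕ) (lam : ℝ) (x : ℤ) : ℝ :=
  poissonOrderK k lam x - poissonOrderK k lam (x - 1)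

/-- The summand of `poissonOrderK`. -/
noncomputable def pg (k : ℕ) (lam : ℝ) (x : ℤ) (t : Fin k → ℕ) : ℝ :=
  if ((∑ i : Fin k, ((i : ℕ) + 1) * t i : ℕ) : ℤ) = x then
    Real.exp (-(k * lam)) * lam ^ (∑ i : Fin k, t i) /
      ∏ i : Fin k, (Nat.factorial (t i) : ℝ)
  else 0

lemma poisson_eq (k : ℕ) (lam : ℝ) (x : ℤ) :
    poissonOrderK k lam x = ∑' t, pg k lam x t := rfl

lemma pg_support (k : ℕ) (lam : ℝ) {x : ℤ} {t : Fin k → ℕ}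
    (h : t ∉ Fintype.piFinset fun _ : Fin k => Finset.range (x.toNat + 1)) :
    pg k lam x t = 0 := by
  rw [pg, if_neg]
  intro hc
  refine h ?_
  simp only [Fintype.mem_piFinset, Finset.mem_range]
  intro i
  have h1 : t i ≤ ∑ j : Fin k, ((j : ℕ) + 1) * t j :=
    le_trans (Nat.le_mul_of_pos_left _ (Nat.succ_pos _))
      (Finset.single_le_sum (f := fun j : Fin k => ((j : ℕ) + 1) * t j)
        (fun j _ => Nat.zero_le _) (Finset.mem_univ i))
  omega

lemma pg_summable_mul (k : ℕ) (lam : ℝ) (x : ℤ) (c : (Fin k → ℕ) → ℝ) :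
    Summable fun t => c t * pg k lam x t :=
  summable_of_ne_finset_zero
    (s := Fintype.piFinset fun _ : Fin k => Finset.range (x.toNat + 1))
    fun t ht => by rw [pg_support k lam ht, mul_zero]

lemma key (k : ℕ) (lam : ℝ) (m : ℤ) :
    (m : ℝ) * poissonOrderK k lam m
      = lam * ∑ i ∈ Finset.range k,
          ((i : ℝ) + 1) * poissonOrderK k lam (m - ((i + 1 : ℕ) : ℤ)) := by
  classical
  have base : ∀ i : Fin k,
      (∑' t : Fin k → ℕ, (t i : ℝ) * pg k lam m t)
        = lam * poissonOrderK k lam (m - (((i : ℕ) + 1 : ℕ) : ℤ)) := by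
    intro i
    set φ : (Fin k → ℕ) → (Fin k → ℕ) := fun s => Function.update s i (s i + 1) with hφ
    have hinj : Function.Injective φ := by
      intro s s' h
      funext j
      rcases eq_or_ne j i with rfl | hj
      · have := congrFun h j
        simpa [φ] using this
      · have := congrFun h j
        simpa [φ, Function.update_of_ne hj] using this
    have hsupp : Function.support (fun t : Fin k → ℕ => (t i : ℝ) * pg k lam m t)
        ⊆ Set.range φ := by
      intro t ht
      have hti : t i ≠ 0 := by
        intro h0
        exact ht (by simp [h0])
      refine ⟨Function.update t i (t i - 1), ?_⟩
      funext j
      rcases eq_or_ne j i with rfl | hj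
      · simp [φ]
        omega
      · simp [φ, Function.update_of_ne hj]
    have hpt : ∀ s : Fin k → ℕ,
        ((φ s i : ℕ) : ℝ) * pg k lam m (φ s)
          = lam * pg k lam (m - (((i : ℕ) + 1 : ℕ) : ℤ)) s := by
      intro s
      have h1 : φ s i = s i + 1 := by simp [φ]
      have hsum1 : ∑ j : Fin k, ((j : ℕ) + 1) * φ s j
          = (∑ j : Fin k, ((j : ℕ) + 1) * s j) + ((i : ℕ) + 1) := by
        have e : ∀ j : Fin k, ((j : ℕ) + 1) * φ s j
            = ((j : ℕ) + 1) * s j + (if j = i then (i : ℕ) + 1 else 0) := by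
          intro j
          rcases eq_or_ne j i with rfl | hj
          · simp [φ]
            try ring
          · simp [φ, Function.update_of_ne hj, hj]
        rw [Finset.sum_congr rfl fun j _ => e j, Finset.sum_add_distrib,
          Finset.sum_ite_eq' Finset.univ i]
        simp
      have hsum2 : ∑ j : Fin k, φ s j = (∑ j : Fin k, s j) + 1 := by
        have e : ∀ j : Fin k, φ s j = s j + (if j = i then 1 else 0) := by
          intro j
          rcases eq_or_ne j i with rfl | hj
          · simp [φ]
          · simp [φ, Function.update_of_ne hj, hj]
        rw [Finset.sum_congr rfl fun j _ => e j, Finset.sum_add_distrib,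
          Finset.sum_ite_eq' Finset.univ i]
        simp
      have hprod : (∏ j : Fin k, (Nat.factorial (φ s j) : ℝ))
          = ((s i : ℝ) + 1) * ∏ j : Fin k, (Nat.factorial (s j) : ℝ) := by
        have e : ∀ j : Fin k, (Nat.factorial (φ s j) : ℝ)
            = (if j = i then (s i : ℝ) + 1 else 1) * (Nat.factorial (s j) : ℝ) := by
          intro j
          rcases eq_or_ne j i with rfl | hj
          · simp [φ, Nat.factorial_succ]
            try push_cast
            try ring
          · simp [φ, Function.update_of_ne hj, hj]
        rw [Finset.prod_congr rfl fun j _ => e j, Finset.prod_mul_distrib,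
          Finset.prod_ite_eq' Finset.univ i]
        simp
      simp only [pg, h1, hsum1, hsum2, hprod]
      by_cases hc : ((∑ j : Fin k, ((j : ℕ) + 1) * s j : ℕ) : ℤ) = m - (((i : ℕ) + 1 : ℕ) : ℤ)
      · rw [if_pos hc, if_pos (by omega)]
        have hne : ((s i : ℝ) + 1) ≠ 0 := by positivity
        have hfac : (∏ j : Fin k, (Nat.factorial (s j) : ℝ)) ≠ 0 :=
          Finset.prod_ne_zero_iff.2 fun j _ => Nat.cast_ne_zero.2 (Nat.factorial_ne_zero _)
        push_cast
        rw [pow_succ]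
        field_simp
      · rw [if_neg hc, if_neg (by omega), mul_zero, mul_zero]
    calc (∑' t : Fin k → ℕ, (t i : ℝ) * pg k lam m t)
        = ∑' s : Fin k → ℕ, ((φ s i : ℕ) : ℝ) * pg k lam m (φ s) :=
          (hinj.tsum_eq hsupp).symm
      _ = ∑' s : Fin k → ℕ, lam * pg k lam (m - (((i : ℕ) + 1 : ℕ) : ℤ)) s :=
          tsum_congr hpt
      _ = lam * poissonOrderK k lam (m - (((i : ℕ) + 1 : ℕ) : ℤ)) := by
          rw [tsum_mul_left, poisson_eq]
  have step2 : ∀ t : Fin k → ℕ, (m : ℝ) * pg k lam m t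
      = ∑ i : Fin k, ((((i : ℕ) + 1) * t i : ℕ) : ℝ) * pg k lam m t := by
    intro t
    rw [← Finset.sum_mul]
    by_cases hc : ((∑ i : Fin k, ((i : ℕ) + 1) * t i : ℕ) : ℤ) = m
    · congr 1
      rw [← hc]
      push_cast
      ring
    · rw [pg, if_neg hc, mul_zero, mul_zero]
  calc (m : ℝ) * poissonOrderK k lam m
      = ∑' t : Fin k → ℕ, (m : ℝ) * pg k lam m t := by
        rw [poisson_eq, ← tsum_mul_left]
    _ = ∑' t : Fin k → ℕ, ∑ i : Fin k, ((((i : ℕ) + 1) * t i : ℕ) : ℝ) * pg k lam m t :=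
        tsum_congr step2
    _ = ∑ i : Fin k, ∑' t : Fin k → ℕ, ((((i : ℕ) + 1) * t i : ℕ) : ℝ) * pg k lam m t :=
        Summable.tsum_finsetSum fun i _ => pg_summable_mul k lam m _
    _ = ∑ i : Fin k, (((i : ℕ) : ℝ) + 1) * (lam * poissonOrderK k lam (m - (((i : ℕ) + 1 : ℕ) : ℤ))) := by
        refine Finset.sum_congr rfl fun i _ => ?_
        rw [← base i, ← tsum_mul_left]
        refine tsum_congr fun t => ?_
        push_cast
        ring
    _ = lam * ∑ i : Fin k, (((i : ℕ) : ℝ) + 1) * poissonOrderK k lam (m - (((i : ℕ) + 1 : ℕ) : ℤ)) := by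
        rw [Finset.mul_sum]
        exact Finset.sum_congr rfl fun i _ => by ring
    _ = lam * ∑ i ∈ Finset.range k,
          ((i : ℝ) + 1) * poissonOrderK k lam (m - ((i + 1 : ℕ) : ℤ)) := by
        congr 1
        exact (Finset.sum_range
          (fun i => ((i : ℝ) + 1) * poissonOrderK k lam (m - ((i + 1 : ℕ) : ℤ)))).symm

lemma alg (k : ℕ) (hk : 2 ≤ k) (lam c : ℝ) (Q : ℕ → ℝ)
    (h0 : (c + 1) * Q 0 = lam * ∑ i ∈ Finset.range k, ((i : ℝ) + 1) * Q (i + 1)) :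
    (c + 1) * ∑ j ∈ Finset.range k, ((j : ℝ) + 1) * Q j
      - (c + 2) * ∑ j ∈ Finset.range k, ((j : ℝ) + 1) * Q (j + 1)
    = (∑ j ∈ Finset.Icc 1 (k - 1), ((j : ℝ) * lam + c + 1 - (j : ℝ)) * Q j)
      + (k : ℝ) * (lam - c - 2) * Q k := by
  obtain ⟨n, rfl⟩ : ∃ n, k = n + 1 := ⟨k - 1, by omega⟩
  have h1 : ∑ j ∈ Finset.range (n + 1), ((j : ℝ) + 1) * Q j
      = (∑ j ∈ Finset.range n, ((j : ℝ) + 1) * Q (j + 1))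
        + (∑ j ∈ Finset.range n, Q (j + 1)) + Q 0 := by
    rw [Finset.sum_range_succ' (fun j => ((j : ℝ) + 1) * Q j) n, ← Finset.sum_add_distrib]
    congr 1
    · exact Finset.sum_congr rfl fun j _ => by push_cast; ring
    · norm_num
  have h2 : ∑ j ∈ Finset.range (n + 1), ((j : ℝ) + 1) * Q (j + 1)
      = (∑ j ∈ Finset.range n, ((j : ℝ) + 1) * Q (j + 1)) + ((n : ℝ) + 1) * Q (n + 1) :=
    Finset.sum_range_succ _ n
  have h3 : ∑ j ∈ Finset.Icc 1 (n + 1 - 1), ((j : ℝ) * lam + c + 1 - (j : ℝ)) * Q j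
      = lam * (∑ j ∈ Finset.range n, ((j : ℝ) + 1) * Q (j + 1))
        + (c + 1) * (∑ j ∈ Finset.range n, Q (j + 1))
        - ∑ j ∈ Finset.range n, ((j : ℝ) + 1) * Q (j + 1) := by
    have hs : Finset.Icc 1 (n + 1 - 1) = Finset.Ico 1 (n + 1) := by
      ext a
      simp only [Finset.mem_Icc, Finset.mem_Ico]
      omega
    rw [hs, Finset.sum_Ico_eq_sum_range]
    rw [show n + 1 - 1 = n by omega]
    rw [Finset.mul_sum, Finset.mul_sum, ← Finset.sum_add_distrib, ← Finset.sum_sub_distrib]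
    refine Finset.sum_congr rfl fun j _ => ?_
    rw [show 1 + j = j + 1 from Nat.add_comm 1 j]
    push_cast
    ring
  rw [h2] at h0
  rw [h1, h2, h3]
  push_cast at h0 ⊢
  linear_combination h0

theorem poissonOrderK_delta_recurrence (k : ℕ) (hk : 2 ≤ k) (lam : ℝ) (hlam : 0 < lam)
    (x : ℕ) :
    ((x : ℝ) + 1) * ((x : ℝ) + 2) / lam * deltaOrderK k lam ((x : ℤ) + 2)
      = (∑ j ∈ Finset.Icc 1 (k - 1),
          ((j : ℝ) * lam + (x : ℝ) + 1 - (j : ℝ)) * poissonOrderK k lam ((x : ℤ) + 1 - (j : ℤ)))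
        + (k : ℝ) * (lam - (x : ℝ) - 2) * poissonOrderK k lam ((x : ℤ) - (k : ℤ) + 1) := by
  have K2' : ((x : ℝ) + 2) * poissonOrderK k lam ((x : ℤ) + 2)
      = lam * ∑ i ∈ Finset.range k,
          ((i : ℝ) + 1) * poissonOrderK k lam ((x : ℤ) + 1 - (i : ℤ)) := by
    have h := key k lam ((x : ℤ) + 2)
    have e : ∀ i ∈ Finset.range k,
        ((i : ℝ) + 1) * poissonOrderK k lam (((x : ℤ) + 2) - ((i + 1 : ℕ) : ℤ))
          = ((i : ℝ) + 1) * poissonOrderK k lam ((x : ℤ) + 1 - (i : ℤ)) := by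
      intro i _
      rw [show ((x : ℤ) + 2) - ((i + 1 : ℕ) : ℤ) = (x : ℤ) + 1 - (i : ℤ) by push_cast; ring]
    rw [Finset.sum_congr rfl e] at h
    rw [show ((((x : ℤ) + 2) : ℤ) : ℝ) = (x : ℝ) + 2 by push_cast; ring] at h
    exact h
  have K1' : ((x : ℝ) + 1) * poissonOrderK k lam ((x : ℤ) + 1)
      = lam * ∑ i ∈ Finset.range k,
          ((i : ℝ) + 1) * poissonOrderK k lam ((x : ℤ) + 1 - ((i + 1 : ℕ) : ℤ)) := by
    have h := key k lam ((x : ℤ) + 1)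
    rw [show ((((x : ℤ) + 1) : ℤ) : ℝ) = (x : ℝ) + 1 by push_cast; ring] at h
    exact h
  have h0 : ((x : ℝ) + 1) * poissonOrderK k lam ((x : ℤ) + 1 - ((0 : ℕ) : ℤ))
      = lam * ∑ i ∈ Finset.range k,
          ((i : ℝ) + 1) * poissonOrderK k lam ((x : ℤ) + 1 - ((i + 1 : ℕ) : ℤ)) := by
    rw [show (x : ℤ) + 1 - ((0 : ℕ) : ℤ) = (x : ℤ) + 1 by norm_num]
    exact K1'
  have halg : ((x : ℝ) + 1) * ∑ j ∈ Finset.range k,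
        ((j : ℝ) + 1) * poissonOrderK k lam ((x : ℤ) + 1 - (j : ℤ))
      - ((x : ℝ) + 2) * ∑ j ∈ Finset.range k,
        ((j : ℝ) + 1) * poissonOrderK k lam ((x : ℤ) + 1 - ((j + 1 : ℕ) : ℤ))
      = (∑ j ∈ Finset.Icc 1 (k - 1),
          ((j : ℝ) * lam + (x : ℝ) + 1 - (j : ℝ)) * poissonOrderK k lam ((x : ℤ) + 1 - (j : ℤ)))
        + (k : ℝ) * (lam - (x : ℝ) - 2) * poissonOrderK k lam ((x : ℤ) + 1 - (k : ℤ)) :=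
    alg k hk lam (x : ℝ) (fun j : ℕ => poissonOrderK k lam ((x : ℤ) + 1 - (j : ℤ))) h0
  simp only [deltaOrderK]
  rw [show (x : ℤ) + 2 - 1 = (x : ℤ) + 1 by ring]
  rw [show (x : ℤ) - (k : ℤ) + 1 = (x : ℤ) + 1 - (k : ℤ) by ring]
  rw [div_mul_eq_mul_div, div_eq_iff hlam.ne']
  linear_combination ((x : ℝ) + 1) * K2' - ((x : ℝ) + 2) * K1' + lam * halg
end

section
/- For every integer λ ≥ 1, Δ_{3λ−1} = P_{3λ−1} − P_{3λ−2} > 0 for the Poisson distribution of order 2 with parameter λ. -/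
open scoped BigOperators
open Real

set_option maxHeartbeats 1000000

noncomputable def phi (L m : ℝ) : ℝ := (L + Real.sqrt (L^2 + 8*L*m)) / 2

lemma phi_sq (L m : ℝ) (hL : 0 ≤ L) (hm : 0 ≤ m) :
    phi L m ^ 2 = L * phi L m + 2*L*m := by
  have h : Real.sqrt (L^2 + 8*L*m) ^ 2 = L^2 + 8*L*m :=
    Real.sq_sqrt (by positivity)
  unfold phi; nlinarith [h]

lemma phi_pos (L m : ℝ) (hL : 0 < L) (hm : 0 ≤ m) : 0 < phi L m := by
  unfold phi; positivity

lemma phi_mono (L : ℝ) (hL : 0 ≤ L) {m m' : ℝ} (h : m ≤ m') : phi L m ≤ phi L m' := by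
  unfold phi
  have h8 : L^2 + 8*L*m ≤ L^2 + 8*L*m' := by
    have := mul_nonneg (mul_nonneg (by norm_num : (0:ℝ) ≤ 8) hL) (sub_nonneg.2 h)
    nlinarith
  have : Real.sqrt (L^2 + 8*L*m) ≤ Real.sqrt (L^2 + 8*L*m') :=
    Real.sqrt_le_sqrt h8
  linarith

lemma keyineq (L n : ℝ) (hL : 3 ≤ L) (hn : 2 ≤ n) (hn3 : n ≤ 3*L - 1) :
    n * phi L (n + 4/5) ≤ (n + 4/5) * phi L (n - 1) := by
  have hL0 : (0:ℝ) < L := by linarith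
  set ψ₁ := Real.sqrt (L^2 + 8*L*(n-1)) with hψ₁def
  set ψ₂ := Real.sqrt (L^2 + 8*L*(n+4/5)) with hψ₂def
  have h1 : ψ₁^2 = L^2 + 8*L*(n-1) := Real.sq_sqrt (by nlinarith)
  have h2 : ψ₂^2 = L^2 + 8*L*(n+4/5) := Real.sq_sqrt (by nlinarith)
  have hψ₁0 : 0 ≤ ψ₁ := Real.sqrt_nonneg _
  have hψ₂0 : 0 ≤ ψ₂ := Real.sqrt_nonneg _
  have h10 : (n+4)^2 ≤ 10*L*n := by
    rcases le_total n 21 with h | h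
    · nlinarith
    · nlinarith
  have hcross : n^2*(L^2+8*L*(n+4/5)) - (16/25*L^2 + (n+4/5)^2*(L^2+8*L*(n-1)))
      ≤ 8/5*L*(n+4/5)*ψ₁ := by
    set R := n^2*(L^2+8*L*(n+4/5)) - (16/25*L^2 + (n+4/5)^2*(L^2+8*L*(n-1))) with hR
    rcases le_or_gt R 0 with h | h
    · exact h.trans (by positivity)
    · have key : (8/5*L*(n+4/5))^2 * (L^2+8*L*(n-1)) - R^2
          = (64/625)*L^2*(5*n+4)^2*(10*L*n - (n+4)^2) := by rw [hR]; ring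
      have hnn : 0 ≤ (64/625)*L^2*(5*n+4)^2*(10*L*n - (n+4)^2) := by
        have h10' := sub_nonneg.2 h10
        positivity
      have hsq : R^2 ≤ (8/5*L*(n+4/5))^2 * ψ₁^2 := by
        rw [h1]; linarith [key, hnn]
      have hb : 0 ≤ 8/5*L*(n+4/5)*ψ₁ := by positivity
      have hsq' : R^2 ≤ (8/5*L*(n+4/5)*ψ₁)^2 := by rw [mul_pow]; exact hsq
      calc R = Real.sqrt (R^2) := (Real.sqrt_sq h.le).symm
      _ ≤ Real.sqrt ((8/5*L*(n+4/5)*ψ₁)^2) := Real.sqrt_le_sqrt hsq'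
      _ = _ := Real.sqrt_sq hb
  -- compare squares
  have hRHS0 : 0 ≤ 4/5*L + (n+4/5)*ψ₁ := by positivity
  have hsq2 : (n*ψ₂)^2 ≤ (4/5*L + (n+4/5)*ψ₁)^2 := by nlinarith [hcross, h1, h2]
  have hfin : n*ψ₂ ≤ 4/5*L + (n+4/5)*ψ₁ := by
    have h0 : 0 ≤ n*ψ₂ := by positivity
    calc n*ψ₂ = Real.sqrt ((n*ψ₂)^2) := (Real.sqrt_sq h0).symm
    _ ≤ Real.sqrt ((4/5*L + (n+4/5)*ψ₁)^2) := Real.sqrt_le_sqrt hsq2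
    _ = _ := Real.sqrt_sq hRHS0
  unfold phi
  rw [← hψ₁def, ← hψ₂def]
  nlinarith [hfin]

noncomputable def pc (L : ℝ) : ℕ → ℝ
  | 0 => 1
  | 1 => L
  | (n+2) => (L * pc L (n+1) + 2*L * pc L n) / (n+2)

lemma pc_pos (L : ℝ) (hL : 0 < L) : ∀ n, 0 < pc L n := by
  have h : ∀ n, 0 < pc L n ∧ 0 < pc L (n+1) := by
    intro n
    induction n with
    | zero => constructor <;> simp [pc, hL]
    | succ m ih =>
      refine ⟨ih.2, ?_⟩
      show 0 < (L * pc L (m+1) + 2*L * pc L m) / (m+2)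
      have h1 := ih.1; have h2 := ih.2
      positivity
  exact fun n => (h n).1

lemma pc_rec (L : ℝ) (m : ℕ) :
    ((m:ℝ)+2) * pc L (m+2) = L * pc L (m+1) + 2*L * pc L m := by
  show ((m:ℝ)+2) * ((L * pc L (m+1) + 2*L * pc L m) / (m+2)) = _
  field_simp


lemma pc_invariant (lam : ℕ) (hlam : 3 ≤ lam) :
    ∀ m : ℕ, (m:ℝ)+1 ≤ 3*(lam:ℝ) - 1 →
      (((m:ℝ)+1) * pc lam (m+1) ≤ pc lam m * phi lam ((m:ℝ)+1)
      ∧ pc lam m * phi lam ((m:ℝ)+1+4/5) ≤ ((m:ℝ)+1+4/5) * pc lam (m+1)) := by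
  have hL3 : (3:ℝ) ≤ (lam:ℝ) := by exact_mod_cast hlam
  have hL0 : (0:ℝ) < (lam:ℝ) := by linarith
  set L : ℝ := (lam:ℝ) with hLdef
  have hpc := pc_pos L hL0
  intro m
  induction m with
  | zero =>
    intro _
    have e0 : pc L 0 = 1 := rfl
    have e1 : pc L 1 = L := rfl
    constructor
    · push_cast
      rw [e0, e1]
      unfold phi
      set s := Real.sqrt (L ^ 2 + 8 * L * ((0:ℝ) + 1)) with hsdef
      have h : Real.sqrt (L^2) ≤ s := by
        rw [hsdef]; exact Real.sqrt_le_sqrt (by nlinarith)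
      rw [Real.sqrt_sq hL0.le] at h
      linarith
    · push_cast
      rw [e0, e1]
      unfold phi
      set s := Real.sqrt (L ^ 2 + 8 * L * ((0:ℝ) + 1 + 4/5)) with hsdef
      have h : s ≤ Real.sqrt ((13/5*L)^2) := by
        rw [hsdef]; exact Real.sqrt_le_sqrt (by nlinarith)
      rw [Real.sqrt_sq (by positivity)] at h
      linarith
  | succ k ih =>
    intro hcond
    have hcond' : (k:ℝ)+2 ≤ 3*L - 1 := by push_cast at hcond ⊢; linarith
    obtain ⟨hU, hLo⟩ := ih (by linarith)
    have hck := hpc k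
    have hck1 := hpc (k+1)
    have hck2 := hpc (k+2)
    set cK := pc L k
    set cK1 := pc L (k+1)
    set cK2 := pc L (k+2)
    have hrec := pc_rec L k
    constructor
    · -- upper
      set M : ℝ := (k:ℝ)+1+4/5 with hMdef
      have hMnn : (0:ℝ) ≤ M := by rw [hMdef]; positivity
      have hMpos : 0 < phi L M := phi_pos _ _ hL0 hMnn
      have hsqM : phi L M ^2 = L * phi L M + 2*L*M := phi_sq _ _ hL0.le hMnn
      have h1 : (((k:ℝ)+2)*cK2) * phi L M ≤ (cK1 * phi L M) * phi L M := by
        calc (((k:ℝ)+2)*cK2) * phi L M = (L*cK1 + 2*L*cK) * phi L M := by rw [hrec]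
        _ = L*cK1*phi L M + 2*L*(cK * phi L M) := by ring
        _ ≤ L*cK1*phi L M + 2*L*(M * cK1) := by
            have := mul_le_mul_of_nonneg_left hLo (by positivity : (0:ℝ) ≤ 2*L)
            linarith
        _ = cK1 * (L * phi L M + 2*L*M) := by ring
        _ = cK1 * (phi L M ^ 2) := by rw [hsqM]
        _ = (cK1 * phi L M) * phi L M := by ring
      have h3 : ((k:ℝ)+2)*cK2 ≤ cK1 * phi L M := le_of_mul_le_mul_right h1 hMpos
      have hmono : phi L M ≤ phi L ((k:ℝ)+2) := phi_mono L hL0.le (by rw [hMdef]; linarith)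
      have h4 : cK1 * phi L M ≤ cK1 * phi L ((k:ℝ)+2) :=
        mul_le_mul_of_nonneg_left hmono hck1.le
      push_cast
      rw [show (k:ℝ)+1+1 = (k:ℝ)+2 by ring]
      calc ((k:ℝ)+2) * cK2 ≤ cK1 * phi L M := h3
      _ ≤ cK1 * phi L ((k:ℝ)+2) := h4
    · -- lower
      have hk1nn : (0:ℝ) ≤ (k:ℝ)+1 := by positivity
      have hφ1pos : 0 < phi L ((k:ℝ)+1) := phi_pos _ _ hL0 hk1nn
      have hsq1 : phi L ((k:ℝ)+1) ^2 = L * phi L ((k:ℝ)+1) + 2*L*((k:ℝ)+1) :=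
        phi_sq _ _ hL0.le hk1nn
      have h1 : (cK1 * phi L ((k:ℝ)+1)) * phi L ((k:ℝ)+1)
          ≤ (((k:ℝ)+2)*cK2) * phi L ((k:ℝ)+1) := by
        calc (cK1 * phi L ((k:ℝ)+1)) * phi L ((k:ℝ)+1)
            = cK1 * (phi L ((k:ℝ)+1))^2 := by ring
        _ = cK1 * (L * phi L ((k:ℝ)+1) + 2*L*((k:ℝ)+1)) := by rw [hsq1]
        _ = L*cK1*phi L ((k:ℝ)+1) + 2*L*(((k:ℝ)+1) * cK1) := by ring
        _ ≤ L*cK1*phi L ((k:ℝ)+1) + 2*L*(cK * phi L ((k:ℝ)+1)) := by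
            have := mul_le_mul_of_nonneg_left hU (by positivity : (0:ℝ) ≤ 2*L)
            linarith
        _ = (L*cK1 + 2*L*cK) * phi L ((k:ℝ)+1) := by ring
        _ = (((k:ℝ)+2)*cK2) * phi L ((k:ℝ)+1) := by rw [hrec]
      have h3 : cK1 * phi L ((k:ℝ)+1) ≤ ((k:ℝ)+2)*cK2 := le_of_mul_le_mul_right h1 hφ1pos
      have hk0 : (0:ℝ) ≤ (k:ℝ) := Nat.cast_nonneg k
      have hkey := keyineq L ((k:ℝ)+2) hL3 (by linarith) hcond'
      rw [show (k:ℝ)+2-1 = (k:ℝ)+1 by ring] at hkey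
      have hnpos : (0:ℝ) < (k:ℝ)+2 := by positivity
      have h5 : ((k:ℝ)+2) * (cK1 * phi L ((k:ℝ)+2+4/5))
          ≤ ((k:ℝ)+2) * ((((k:ℝ)+2)+4/5) * cK2) := by
        calc ((k:ℝ)+2) * (cK1 * phi L ((k:ℝ)+2+4/5))
            = cK1 * (((k:ℝ)+2) * phi L ((k:ℝ)+2+4/5)) := by ring
        _ ≤ cK1 * ((((k:ℝ)+2)+4/5) * phi L ((k:ℝ)+1)) :=
            mul_le_mul_of_nonneg_left hkey hck1.le
        _ = (((k:ℝ)+2)+4/5) * (cK1 * phi L ((k:ℝ)+1)) := by ring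
        _ ≤ (((k:ℝ)+2)+4/5) * (((k:ℝ)+2)*cK2) :=
            mul_le_mul_of_nonneg_left h3 (by positivity)
        _ = ((k:ℝ)+2) * ((((k:ℝ)+2)+4/5) * cK2) := by ring
      have h6 := le_of_mul_le_mul_left h5 hnpos
      push_cast
      rw [show (k:ℝ)+1+1+4/5 = (k:ℝ)+2+4/5 by ring]
      exact h6.trans_eq (by ring)

lemma pc_main (lam : ℕ) (hlam : 3 ≤ lam) :
    pc lam (3*lam-2) < pc lam (3*lam-1) := by
  have hL3 : (3:ℝ) ≤ (lam:ℝ) := by exact_mod_cast hlam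
  have hL0 : (0:ℝ) < (lam:ℝ) := by linarith
  set L : ℝ := (lam:ℝ) with hLdef
  have hcast : ((3*lam-2 : ℕ) : ℝ) = 3*L - 2 := by
    have h2 : (2:ℕ) ≤ 3*lam := by omega
    rw [hLdef]
    push_cast [Nat.cast_sub h2]
    ring
  have hInv := (pc_invariant lam hlam (3*lam-2) (by rw [hcast]; linarith)).2
  rw [hcast] at hInv
  have hidx : 3*lam-2+1 = 3*lam-1 := by omega
  rw [hidx] at hInv
  rw [show 3*L-2+1+4/5 = 3*L-1/5 by ring] at hInv
  have hT : (0:ℝ) ≤ 5*L - 2/5 := by linarith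
  have hs : 5*L - 2/5 < Real.sqrt (L^2 + 8*L*(3*L-1/5)) := by
    rw [show L^2 + 8*L*(3*L-1/5) = (5*L-2/5)^2 + (12/5*L - 4/25) by ring]
    have h1 : (5*L-2/5) < Real.sqrt ((5*L-2/5)^2 + (12/5*L - 4/25)) := by
      have := Real.sqrt_lt_sqrt (sq_nonneg (5*L-2/5))
        (by nlinarith : (5*L-2/5)^2 < (5*L-2/5)^2 + (12/5*L - 4/25))
      rwa [Real.sqrt_sq hT] at this
    exact h1
  have hphiT : 3*L - 1/5 < phi L (3*L-1/5) := by
    unfold phi; linarith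
  have hp1 := pc_pos L hL0 (3*lam-2)
  have hp2 := pc_pos L hL0 (3*lam-1)
  have hTpos : (0:ℝ) < 3*L - 1/5 := by linarith
  have hchain : pc L (3*lam-2) * (3*L-1/5) < (3*L-1/5) * pc L (3*lam-1) := by
    calc pc L (3*lam-2) * (3*L-1/5) < pc L (3*lam-2) * phi L (3*L-1/5) :=
          (mul_lt_mul_iff_right₀ hp1).2 hphiT
    _ ≤ (3*L-1/5) * pc L (3*lam-1) := hInv
  have := (mul_lt_mul_iff_left₀ hTpos).1 (by linarith [hchain] :
    pc L (3*lam-2) * (3*L-1/5) < pc L (3*lam-1) * (3*L-1/5))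
  exact this

lemma pc_main' (lam : ℕ) (hlam : 1 ≤ lam) :
    pc lam (3*lam-2) < pc lam (3*lam-1) := by
  match lam, hlam with
  | 1, _ =>
    show pc ((1:ℕ):ℝ) (3*1-2) < pc ((1:ℕ):ℝ) (3*1-1)
    norm_num
    have h0 : pc (1:ℝ) 0 = 1 := rfl
    have h1 : pc (1:ℝ) 1 = 1 := rfl
    have r0 := pc_rec (1:ℝ) 0
    rw [h0, h1] at r0
    norm_num at r0
    rw [h1]
    linarith
  | 2, _ =>
    show pc ((2:ℕ):ℝ) (3*2-2) < pc ((2:ℕ):ℝ) (3*2-1)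
    norm_num
    have h0 : pc (2:ℝ) 0 = 1 := rfl
    have h1 : pc (2:ℝ) 1 = 2 := rfl
    have r0 := pc_rec (2:ℝ) 0
    have r1 := pc_rec (2:ℝ) 1
    have r2 := pc_rec (2:ℝ) 2
    have r3 := pc_rec (2:ℝ) 3
    rw [h0, h1] at r0
    rw [h1] at r1
    norm_num at r0 r1 r2 r3
    linarith
  | (n+3), _ => exact pc_main (n+3) (by omega)

noncomputable def g (L : ℝ) (N j : ℕ) : ℝ :=
  if 2*j ≤ N then L^(N-j) / ((Nat.factorial (N-2*j) : ℝ) * (Nat.factorial j : ℝ)) else 0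

noncomputable def Spc (L : ℝ) (N : ℕ) : ℝ := ∑ j ∈ Finset.range (N+1), g L N j

lemma g_zero (L : ℝ) (N j : ℕ) (h : ¬ 2*j ≤ N) : g L N j = 0 := if_neg h

lemma g_key (L : ℝ) (M j : ℕ) :
    ((M:ℝ)+2) * g L (M+2) j
      = L * g L (M+1) j + (if j = 0 then 0 else 2*L*g L M (j-1)) := by
  match j with
  | 0 =>
    simp only [g, if_pos (by omega : 2*0 ≤ M+2), if_pos (by omega : 2*0 ≤ M+1),
      if_pos rfl, if_true, Nat.mul_zero, Nat.sub_zero]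
    have hf : (Nat.factorial (M+2) : ℝ) = ((M:ℝ)+2) * (Nat.factorial (M+1) : ℝ) := by
      rw [show M+2 = (M+1)+1 from rfl, Nat.factorial_succ]; push_cast; ring
    have hp : L^(M+2) = L^(M+1) * L := by
      rw [show M+2 = (M+1)+1 from rfl, pow_succ]
    rw [hf, hp, Nat.factorial_zero]
    have h1 : (Nat.factorial (M+1) : ℝ) ≠ 0 := by positivity
    have h2 : ((M:ℝ)+2) ≠ 0 := by positivity
    push_cast
    field_simp
    ring
  | (j'+1) =>
    rcases le_or_gt (2*(j'+1)) (M+1) with hc1 | hc2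
    · -- main case
      obtain ⟨c, hc⟩ : ∃ c, M - 2*j' = c+1 := ⟨M-2*j'-1, by omega⟩
      have hM : M = c + 2*j' + 1 := by omega
      obtain ⟨e, he⟩ : ∃ e, M - j' = e := ⟨M - j', rfl⟩
      have hif0 : j'+1 ≠ 0 := by omega
      simp only [g, if_pos (by omega : 2*(j'+1) ≤ M+2), if_pos hc1, if_neg hif0,
        if_pos (by omega : 2*(j'+1-1) ≤ M)]
      rw [show M+2-2*(j'+1) = c+1 by omega, show M+1-2*(j'+1) = c by omega,
          show j'+1-1 = j' from rfl, show M-2*j' = c+1 by omega,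
          show M+2-(j'+1) = e+1 by omega, show M+1-(j'+1) = e by omega,
          show M-j' = e from he]
      rw [Nat.factorial_succ c, Nat.factorial_succ j', pow_succ]
      have hMc : (M:ℝ) = (c:ℝ) + 2*(j':ℝ) + 1 := by exact_mod_cast congrArg (Nat.cast (R := ℝ)) hM
      push_cast
      rw [hMc]
      have h1 : (Nat.factorial c : ℝ) ≠ 0 := by positivity
      have h2 : (Nat.factorial j' : ℝ) ≠ 0 := by positivity
      have h3 : ((c:ℝ)+1) ≠ 0 := by positivity
      have h4 : ((j':ℝ)+1) ≠ 0 := by positivity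
      field_simp
      ring
    · rcases le_or_gt (2*(j'+1)) (M+2) with hc3 | hc4
      · -- boundary : 2*(j'+1) = M+2
        have hM : M = 2*j' := by omega
        have hif0 : j'+1 ≠ 0 := by omega
        simp only [g, if_pos hc3, if_neg (by omega : ¬ 2*(j'+1) ≤ M+1), if_neg hif0,
          if_pos (by omega : 2*(j'+1-1) ≤ M)]
        rw [show M+2-2*(j'+1) = 0 by omega, show j'+1-1 = j' from rfl,
            show M-2*j' = 0 by omega, show M+2-(j'+1) = j'+1 by omega,
            show M-j' = j' by omega]
        rw [Nat.factorial_zero, Nat.factorial_succ j', pow_succ]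
        have hMc : (M:ℝ) = 2*(j':ℝ) := by exact_mod_cast congrArg (Nat.cast (R := ℝ)) hM
        push_cast
        rw [hMc]
        have h2 : (Nat.factorial j' : ℝ) ≠ 0 := by positivity
        have h4 : ((j':ℝ)+1) ≠ 0 := by positivity
        field_simp
        ring
      · -- all zero
        have hif0 : j'+1 ≠ 0 := by omega
        simp only [g, if_neg (by omega : ¬ 2*(j'+1) ≤ M+2),
          if_neg (by omega : ¬ 2*(j'+1) ≤ M+1), if_neg hif0,
          if_neg (by omega : ¬ 2*(j'+1-1) ≤ M)]
        ring

lemma Spc_rec (L : ℝ) (M : ℕ) :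
    ((M:ℝ)+2) * Spc L (M+2) = L * Spc L (M+1) + 2*L*Spc L M := by
  unfold Spc
  rw [Finset.mul_sum, Finset.mul_sum, Finset.mul_sum]
  have lhs_eq : ∑ j ∈ Finset.range (M+2+1), ((M:ℝ)+2) * g L (M+2) j
      = ∑ j ∈ Finset.range (M+2+1),
          (L * g L (M+1) j + (if j = 0 then 0 else 2*L*g L M (j-1))) :=
    Finset.sum_congr rfl (fun j _ => g_key L M j)
  rw [lhs_eq, Finset.sum_add_distrib]
  congr 1
  · -- drop the top (vanishing) term
    rw [Finset.sum_range_succ, g_zero L (M+1) (M+2) (by omega), mul_zero, add_zero]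
  · -- shift the index
    rw [Finset.sum_range_succ' (fun j => if j = 0 then (0:ℝ) else 2*L*g L M (j-1)) (M+2)]
    have hcg : ∀ j ∈ Finset.range (M+2),
        (if j+1 = 0 then (0:ℝ) else 2*L*g L M (j+1-1)) = 2*L*g L M j := by
      intro j _
      rw [if_neg (Nat.succ_ne_zero j)]
      norm_num
    rw [Finset.sum_congr rfl hcg, if_pos rfl, add_zero]
    rw [Finset.sum_range_succ, g_zero L M (M+1) (by omega), mul_zero, add_zero]

lemma Spc_eq_pc (L : ℝ) : ∀ N, Spc L N = pc L N := by
  have h : ∀ N, Spc L N = pc L N ∧ Spc L (N+1) = pc L (N+1) := by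
    intro N
    induction N with
    | zero =>
      constructor
      · show Spc L 0 = 1
        simp [Spc, g]
      · show Spc L 1 = L
        rw [Spc, Finset.sum_range_succ, Finset.sum_range_succ, Finset.sum_range_zero]
        rw [g_zero L 1 1 (by omega)]
        simp [g]
    | succ N ih =>
      refine ⟨ih.2, ?_⟩
      have hrec := Spc_rec L N
      have hpcrec := pc_rec L N
      have hne : ((N:ℝ)+2) ≠ 0 := by positivity
      have : ((N:ℝ)+2) * Spc L (N+2) = ((N:ℝ)+2) * pc L (N+2) := by
        rw [hrec, hpcrec, ih.1, ih.2]
      exact mul_left_cancel₀ hne this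
  exact fun N => (h N).1

lemma poisson_eq_s19 (lam : ℝ) (N : ℕ) :
    poissonOrderK 2 lam (N : ℤ) = Real.exp (-(2*lam)) * Spc lam N := by
  unfold poissonOrderK
  rw [← Equiv.tsum_eq ((piFinTwoEquiv (fun _ : Fin 2 => ℕ)).symm)]
  simp only [piFinTwoEquiv_symm_apply, Fin.sum_univ_two, Fin.prod_univ_two,
    Fin.cons_zero, Fin.cons_one, Fin.val_zero, Fin.val_one, Fin.isValue]
  rw [tsum_eq_sum (s := (Finset.range (N+1)) ×ˢ (Finset.range (N+1))) ?side]
  case side =>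
    intro p hp
    rw [if_neg]
    intro hcond
    rw [Finset.mem_product] at hp
    simp only [Finset.mem_range, not_and_or, not_lt] at hp
    have : (0+1)*p.1 + (1+1)*p.2 = N := by exact_mod_cast hcond
    omega
  rw [Finset.sum_product_right]
  have inner : ∀ j ∈ Finset.range (N+1),
      (∑ a ∈ Finset.range (N+1),
        if ((((0:ℕ)+1)*a + ((1:ℕ)+1)*j : ℕ) : ℤ) = (N:ℤ) then
          Real.exp (-((2:ℕ) * lam)) * lam ^ (a + j) / ((Nat.factorial a : ℝ) * (Nat.factorial j : ℝ))
        else 0)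
      = Real.exp (-(2*lam)) * g lam N j := by
    intro j hj
    rcases le_or_gt (2*j) N with hle | hlt
    · rw [Finset.sum_eq_single (N - 2*j)]
      · rw [if_pos (by push_cast; omega)]
        rw [g, if_pos hle]
        rw [show N - 2*j + j = N - j by omega]
        push_cast
        ring
      · intro b _ hb
        rw [if_neg]
        intro hcond
        have : (0+1)*b + (1+1)*j = N := by exact_mod_cast hcond
        omega
      · intro h
        exact absurd (Finset.mem_range.2 (by omega)) h
    · rw [Finset.sum_eq_zero, g_zero lam N j (by omega), mul_zero]
      intro b _
      rw [if_neg]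
      intro hcond
      have : (0+1)*b + (1+1)*j = N := by exact_mod_cast hcond
      omega
  rw [Finset.sum_congr rfl inner, Spc, Finset.mul_sum]

theorem poissonOrder2_delta_pos (lam : ℕ) (hlam : 1 ≤ lam) :
    0 < poissonOrderK 2 (lam : ℝ) (3 * (lam : ℤ) - 1)
        - poissonOrderK 2 (lam : ℝ) (3 * (lam : ℤ) - 2) := by
  have h1 : (3 * (lam : ℤ) - 1) = ((3*lam - 1 : ℕ) : ℤ) := by omega
  have h2 : (3 * (lam : ℤ) - 2) = ((3*lam - 2 : ℕ) : ℤ) := by omega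
  rw [h1, h2, poisson_eq_s19, poisson_eq_s19, Spc_eq_pc, Spc_eq_pc, ← mul_sub]
  exact mul_pos (Real.exp_pos _) (sub_pos.2 (pc_main' lam hlam))
end
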